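/- The quotient ring Z[x1,x2,y1]/(2*x1 - 3*x2, x1 - x2 + 2*y1, x1*x2) is isomorphic as a ring to Z[t]/(24*t^2). -/

import Mathlib

open MvPolynomial

noncomputable section ChowAux

def chowI : Ideal (MvPolynomial (Fin 3) ℤ) :=
  Ideal.span ({2 * X 0 - 3 * X 1, X 0 - X 1 + 2 * X 2, X 0 * X 1} :
    Set (MvPolynomial (Fin 3) ℤ))

def chowJ : Ideal (Polynomial ℤ) :=
  Ideal.span ({24 * Polynomial.X ^ 2} : Set (Polynomial ℤ))

lemma g1_mem : (2 * X 0 - 3 * X 1 : MvPolynomial (Fin 3) ℤ) ∈ chowI :=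
  Ideal.subset_span (by simp)

lemma g2_mem : (X 0 - X 1 + 2 * X 2 : MvPolynomial (Fin 3) ℤ) ∈ chowI :=
  Ideal.subset_span (by simp)

lemma g3_mem : (X 0 * X 1 : MvPolynomial (Fin 3) ℤ) ∈ chowI :=
  Ideal.subset_span (by simp)

def chowW : Fin 3 → Polynomial ℤ :=
  ![6 * Polynomial.X, 4 * Polynomial.X, -Polynomial.X]

def chowE : MvPolynomial (Fin 3) ℤ →+* Polynomial ℤ :=
  eval₂Hom Polynomial.C chowW

def chowPhi0 : MvPolynomial (Fin 3) ℤ →+* (Polynomial ℤ ⧸ chowJ) :=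
  (Ideal.Quotient.mk chowJ).comp chowE

lemma chowE_X0 : chowE (X 0) = 6 * Polynomial.X := by simp [chowE, chowW]
lemma chowE_X1 : chowE (X 1) = 4 * Polynomial.X := by simp [chowE, chowW]
lemma chowE_X2 : chowE (X 2) = -Polynomial.X := by simp [chowE, chowW]

lemma chowPhi0_g1 : chowPhi0 (2 * X 0 - 3 * X 1) = 0 := by
  have h : chowE (2 * X 0 - 3 * X 1) = 0 := by
    have h2 : chowE 2 = 2 := map_ofNat _ 2
    have h3 : chowE 3 = 3 := map_ofNat _ 3
    rw [map_sub, map_mul, map_mul, h2, h3, chowE_X0, chowE_X1]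
    ring
  simp [chowPhi0, h]

lemma chowPhi0_g2 : chowPhi0 (X 0 - X 1 + 2 * X 2) = 0 := by
  have h : chowE (X 0 - X 1 + 2 * X 2) = 0 := by
    have h2 : chowE 2 = 2 := map_ofNat _ 2
    rw [map_add, map_sub, map_mul, h2, chowE_X0, chowE_X1, chowE_X2]
    ring
  simp [chowPhi0, h]

lemma chowPhi0_g3 : chowPhi0 (X 0 * X 1) = 0 := by
  have h : chowE (X 0 * X 1) = 24 * Polynomial.X ^ 2 := by
    rw [map_mul, chowE_X0, chowE_X1]; ring
  simp only [chowPhi0, RingHom.comp_apply, h]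
  rw [Ideal.Quotient.eq_zero_iff_mem, chowJ]
  exact Ideal.subset_span rfl

lemma chowPhi0_ker : ∀ a ∈ chowI, chowPhi0 a = 0 := by
  intro a ha
  have h : chowI ≤ RingHom.ker chowPhi0 := by
    rw [chowI, Ideal.span_le]
    rintro p (rfl | rfl | rfl)
    · exact chowPhi0_g1
    · exact chowPhi0_g2
    · exact chowPhi0_g3
  exact h ha

def chowPhi : (MvPolynomial (Fin 3) ℤ ⧸ chowI) →+* (Polynomial ℤ ⧸ chowJ) :=
  Ideal.Quotient.lift chowI chowPhi0 chowPhi0_ker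

lemma mem_chowI_24 : 24 * (X 2 : MvPolynomial (Fin 3) ℤ) ^ 2 ∈ chowI := by
  have key : 24 * (X 2 : MvPolynomial (Fin 3) ℤ) ^ 2 =
      (-10 * X 2 + 5 * (X 0 - X 1 + 2 * X 2) - (2 * X 0 - 3 * X 1)) * (2 * X 0 - 3 * X 1) +
      (24 * X 2 - 6 * (X 0 - X 1 + 2 * X 2)) * (X 0 - X 1 + 2 * X 2) +
      X 0 * X 1 := by ring
  rw [key]
  exact Ideal.add_mem _ (Ideal.add_mem _ (Ideal.mul_mem_left _ _ g1_mem)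
    (Ideal.mul_mem_left _ _ g2_mem)) g3_mem

def chowF : Polynomial ℤ →+* MvPolynomial (Fin 3) ℤ :=
  Polynomial.eval₂RingHom C (-X 2)

lemma chowF_X : chowF Polynomial.X = -X 2 := by simp [chowF]

def chowPsi0 : Polynomial ℤ →+* (MvPolynomial (Fin 3) ℤ ⧸ chowI) :=
  (Ideal.Quotient.mk chowI).comp chowF

lemma chowPsi0_gen : chowPsi0 (24 * Polynomial.X ^ 2) = 0 := by
  have h : chowF (24 * Polynomial.X ^ 2) = 24 * X 2 ^ 2 := by
    have h24 : chowF 24 = 24 := map_ofNat _ 24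
    rw [map_mul, map_pow, h24, chowF_X]
    ring
  simp only [chowPsi0, RingHom.comp_apply, h]
  rw [Ideal.Quotient.eq_zero_iff_mem]
  exact mem_chowI_24

lemma chowPsi0_ker : ∀ a ∈ chowJ, chowPsi0 a = 0 := by
  intro a ha
  have h : chowJ ≤ RingHom.ker chowPsi0 := by
    rw [chowJ, Ideal.span_le]
    rintro p rfl
    exact chowPsi0_gen
  exact h ha

def chowPsi : (Polynomial ℤ ⧸ chowJ) →+* (MvPolynomial (Fin 3) ℤ ⧸ chowI) :=
  Ideal.Quotient.lift chowJ chowPsi0 chowPsi0_ker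

lemma chowPhi_mk (p : MvPolynomial (Fin 3) ℤ) :
    chowPhi (Ideal.Quotient.mk chowI p) = Ideal.Quotient.mk chowJ (chowE p) := rfl

lemma chowPsi_mk (p : Polynomial ℤ) :
    chowPsi (Ideal.Quotient.mk chowJ p) = Ideal.Quotient.mk chowI (chowF p) := rfl

lemma chow_left : chowPhi.comp chowPsi = RingHom.id _ := by
  apply Ideal.Quotient.ringHom_ext
  apply Polynomial.ringHom_ext'
  · exact Subsingleton.elim _ _
  · show chowPhi (chowPsi (Ideal.Quotient.mk chowJ Polynomial.X)) =
      Ideal.Quotient.mk chowJ Polynomial.X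
    rw [chowPsi_mk, chowF_X, chowPhi_mk, map_neg, chowE_X2, neg_neg]

lemma chow_right : chowPsi.comp chowPhi = RingHom.id _ := by
  apply Ideal.Quotient.ringHom_ext
  apply MvPolynomial.ringHom_ext
  · intro r
    show chowPsi (chowPhi (Ideal.Quotient.mk chowI (C r))) = Ideal.Quotient.mk chowI (C r)
    rw [chowPhi_mk, chowPsi_mk]
    congr 1
    simp [chowE, chowF]
  · intro i
    fin_cases i
    · show chowPsi (chowPhi (Ideal.Quotient.mk chowI (X 0))) = Ideal.Quotient.mk chowI (X 0)
      rw [chowPhi_mk, chowE_X0, chowPsi_mk, Ideal.Quotient.eq]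
      have hF : chowF (6 * Polynomial.X) = 6 * (-X 2) := by
        have h6 : chowF 6 = 6 := map_ofNat _ 6
        rw [map_mul, h6, chowF_X]
      rw [hF]
      have : (6 : MvPolynomial (Fin 3) ℤ) * (-X 2) - X 0 =
          (2 * X 0 - 3 * X 1) - 3 * (X 0 - X 1 + 2 * X 2) := by ring
      rw [this]
      exact Ideal.sub_mem _ g1_mem (Ideal.mul_mem_left _ _ g2_mem)
    · show chowPsi (chowPhi (Ideal.Quotient.mk chowI (X 1))) = Ideal.Quotient.mk chowI (X 1)
      rw [chowPhi_mk, chowE_X1, chowPsi_mk, Ideal.Quotient.eq]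
      have hF : chowF (4 * Polynomial.X) = 4 * (-X 2) := by
        have h4 : chowF 4 = 4 := map_ofNat _ 4
        rw [map_mul, h4, chowF_X]
      rw [hF]
      have : (4 : MvPolynomial (Fin 3) ℤ) * (-X 2) - X 1 =
          (2 * X 0 - 3 * X 1) - 2 * (X 0 - X 1 + 2 * X 2) := by ring
      rw [this]
      exact Ideal.sub_mem _ g1_mem (Ideal.mul_mem_left _ _ g2_mem)
    · show chowPsi (chowPhi (Ideal.Quotient.mk chowI (X 2))) = Ideal.Quotient.mk chowI (X 2)
      rw [chowPhi_mk, chowE_X2, chowPsi_mk, map_neg, chowF_X, neg_neg]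

/-- The quotient ring ℤ[x₁,x₂,y₁]/(2x₁-3x₂, x₁-x₂+2y₁, x₁x₂) is isomorphic
to ℤ[t]/(24t²). -/
theorem stmt_0 :
    Nonempty
      ((MvPolynomial (Fin 3) ℤ ⧸
          Ideal.span ({2 * X 0 - 3 * X 1, X 0 - X 1 + 2 * X 2, X 0 * X 1} :
            Set (MvPolynomial (Fin 3) ℤ)))
        ≃+*
       (Polynomial ℤ ⧸
          Ideal.span ({24 * Polynomial.X ^ 2} : Set (Polynomial ℤ)))) :=
  ⟨RingEquiv.ofRingHom chowPhi chowPsi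
    (h₂ := RingHom.ext fun x => RingHom.congr_fun chow_right x)
    (h₁ := RingHom.ext fun x => RingHom.congr_fun chow_left x)⟩

end ChowAux
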